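/- Let K, K′ ⊆ ℝ^n be locally anti-blocking convex bodies. For σ ∈ {−1,1}^n write K_σ = K ∩ σℝ_+^n and K′_σ = K′ ∩ σℝ_+^n. Then K + K′ = ⋃_{σ ∈ {−1,1}^n} (K_σ + K′_σ), and for distinct σ, τ the sets K_σ + K′_σ and K_τ + K′_τ have intersection of Lebesgue measure zero. -/

import Mathlib

open MeasureTheory
open scoped Pointwise

noncomputable section

/-- The nonnegative orthant `ℝ₊ⁿ`. -/
def nonnegOrthant (n : ℕ) : Set (EuclideanSpace ℝ (Fin n)) := {x | ∀ i, 0 ≤ x i}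

/-- The sign `±1` associated to a boolean. -/
def sgn (b : Bool) : ℝ := if b then 1 else -1

/-- The closed orthant `σ ℝ₊ⁿ` corresponding to a sign vector `σ ∈ {-1,1}ⁿ`. -/
def signedOrthant {n : ℕ} (σ : Fin n → Bool) : Set (EuclideanSpace ℝ (Fin n)) :=
  {x | ∀ i, 0 ≤ sgn (σ i) * x i}

/-- Coordinatewise reflection `σ S = {(σ₁x₁, …, σₙxₙ) : x ∈ S}`. -/
def sigmaAct {n : ℕ} (σ : Fin n → Bool) (S : Set (EuclideanSpace ℝ (Fin n))) :
    Set (EuclideanSpace ℝ (Fin n)) :=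
  (fun x : EuclideanSpace ℝ (Fin n) => (WithLp.toLp 2 (fun i => sgn (σ i) * x i) : EuclideanSpace ℝ (Fin n))) '' S

/-- Orthogonal projection onto the coordinate subspace `span {eᵢ : i ∈ I}`. -/
def coordProj {n : ℕ} (I : Finset (Fin n)) (x : EuclideanSpace ℝ (Fin n)) :
    EuclideanSpace ℝ (Fin n) :=
  (WithLp.toLp 2 (fun i => if i ∈ I then x i else 0) : EuclideanSpace ℝ (Fin n))

/-- The coordinate subspace `span {eᵢ : i ∈ I}`, as a set. -/
def coordSubspace {n : ℕ} (I : Finset (Fin n)) : Set (EuclideanSpace ℝ (Fin n)) :=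
  {x | ∀ i ∉ I, x i = 0}

/-- A set `K ⊆ ℝ₊ⁿ` is anti-blocking if for every coordinate subspace `E` the orthogonal
projection `P_E K` equals the section `K ∩ E`. -/
def IsAntiBlocking {n : ℕ} (K : Set (EuclideanSpace ℝ (Fin n))) : Prop :=
  K ⊆ nonnegOrthant n ∧ ∀ I : Finset (Fin n), coordProj I '' K = K ∩ coordSubspace I

/-- `K` is locally anti-blocking if `(σK) ∩ ℝ₊ⁿ` is anti-blocking for every sign vector `σ`. -/
def IsLocallyAntiBlocking {n : ℕ} (K : Set (EuclideanSpace ℝ (Fin n))) : Prop :=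
  ∀ σ : Fin n → Bool, IsAntiBlocking (sigmaAct σ K ∩ nonnegOrthant n)

/-- The coordinate simplex `conv{0, e₁, …}` in the Euclidean space with coordinates `ι`. -/
def coordSimplex (ι : Type*) [Fintype ι] [DecidableEq ι] : Set (EuclideanSpace ℝ ι) :=
  convexHull ℝ (insert 0 (Set.range fun i : ι => EuclideanSpace.single i (1 : ℝ)))

/-- Restriction to the coordinates in `I`, realizing the orthogonal projection onto
`span {eᵢ : i ∈ I}` as a map onto a `#I`-dimensional Euclidean space (so that volumes of
images compute lower-dimensional Lebesgue measures of coordinate projections). -/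
def restrictCoords {n : ℕ} (I : Finset (Fin n)) (x : EuclideanSpace ℝ (Fin n)) :
    EuclideanSpace ℝ ↥I :=
  (WithLp.toLp 2 (fun i => x i) : EuclideanSpace ℝ ↥I)

lemma sgn_mul_self (b : Bool) : sgn b * sgn b = 1 := by cases b <;> norm_num [sgn]
lemma sgn_ne_zero (b : Bool) : sgn b ≠ 0 := by cases b <;> norm_num [sgn]

lemma zero_coord_mem {n : ℕ} {K : Set (EuclideanSpace ℝ (Fin n))}
    (hK : IsLocallyAntiBlocking K) {x : EuclideanSpace ℝ (Fin n)} (hx : x ∈ K) (i : Fin n) :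
    ((WithLp.toLp 2 (fun j => if j = i then 0 else x j) : EuclideanSpace ℝ (Fin n))) ∈ K := by
  classical
  set τ : Fin n → Bool := fun j => decide (0 ≤ x j) with hτ
  have hsgn : ∀ j, 0 ≤ sgn (τ j) * x j := by
    intro j
    rcases le_or_gt 0 (x j) with h | h
    · simp [hτ, sgn, h]
    · simp [hτ, sgn, not_le.mpr h]
      linarith
  have hτx : (WithLp.toLp 2 (fun j => sgn (τ j) * x j) : EuclideanSpace ℝ (Fin n)) ∈
      sigmaAct τ K ∩ nonnegOrthant n := ⟨⟨x, hx, rfl⟩, hsgn⟩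
  obtain ⟨hsub, hproj⟩ := hK τ
  set I : Finset (Fin n) := Finset.univ.erase i with hI
  have hmem : coordProj I (WithLp.toLp 2 (fun j => sgn (τ j) * x j)) ∈ sigmaAct τ K := by
    have h1 : coordProj I (WithLp.toLp 2 (fun j => sgn (τ j) * x j)) ∈
        coordProj I '' (sigmaAct τ K ∩ nonnegOrthant n) := ⟨_, hτx, rfl⟩
    rw [hproj I] at h1
    exact h1.1.1
  obtain ⟨w, hwK, hw⟩ := hmem
  have hweq : w = (WithLp.toLp 2 (fun j => if j = i then 0 else x j) : EuclideanSpace ℝ (Fin n)) := by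
    ext j
    have hj := congrArg (fun v : EuclideanSpace ℝ (Fin n) => v j) hw
    simp only [coordProj, PiLp.toLp_apply] at hj
    by_cases hji : j = i
    · subst hji
      simp only [hI, Finset.mem_erase, ne_eq, not_true_eq_false, false_and, if_neg,
        not_false_eq_true] at hj
      have : sgn (τ j) * w j = 0 := by simpa using hj
      simp [mul_eq_zero, sgn_ne_zero] at this
      simp [this]
    · have hjI : j ∈ I := by simp [hI, hji]
      rw [if_pos hjI] at hj
      have := mul_left_cancel₀ (sgn_ne_zero (τ j)) hj
      simp [hji, this]
  rwa [hweq] at hwK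

lemma update_mem {n : ℕ} {K : Set (EuclideanSpace ℝ (Fin n))}
    (hconv : Convex ℝ K) (hK : IsLocallyAntiBlocking K)
    {x : EuclideanSpace ℝ (Fin n)} (hx : x ∈ K) (i : Fin n) {s : ℝ}
    (hs : (0 ≤ s ∧ s ≤ x i) ∨ (x i ≤ s ∧ s ≤ 0)) :
    ((WithLp.toLp 2 (fun j => if j = i then s else x j) : EuclideanSpace ℝ (Fin n))) ∈ K := by
  set y : EuclideanSpace ℝ (Fin n) := WithLp.toLp 2 (fun j => if j = i then 0 else x j) with hydef
  have hy : y ∈ K := zero_coord_mem hK hx i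
  by_cases hxi : x i = 0
  · have hs0 : s = 0 := by rcases hs with ⟨h1, h2⟩ | ⟨h1, h2⟩ <;> linarith
    rwa [hs0]
  · set θ : ℝ := s / x i with hθdef
    have hθ0 : 0 ≤ θ := by
      rcases hs with ⟨h1, h2⟩ | ⟨h1, h2⟩
      · have hxpos : 0 < x i := lt_of_le_of_ne (h1.trans h2) (Ne.symm hxi)
        exact div_nonneg h1 hxpos.le
      · have hxneg : x i < 0 := lt_of_le_of_ne (h1.trans h2) hxi
        exact div_nonneg_iff.mpr (Or.inr ⟨h2, hxneg.le⟩)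
    have hθ1 : θ ≤ 1 := by
      rcases hs with ⟨h1, h2⟩ | ⟨h1, h2⟩
      · have hxpos : 0 < x i := lt_of_le_of_ne (h1.trans h2) (Ne.symm hxi)
        exact (div_le_one hxpos).mpr h2
      · have hxneg : x i < 0 := lt_of_le_of_ne (h1.trans h2) hxi
        exact div_le_one_iff.mpr (Or.inr (Or.inr ⟨hxneg, h1⟩))
    have hcomb := hconv hx hy hθ0 (by linarith : (0:ℝ) ≤ 1 - θ) (by ring)
    have heq : ((WithLp.toLp 2 (fun j => if j = i then s else x j) : EuclideanSpace ℝ (Fin n)))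
        = θ • x + (1 - θ) • y := by
      ext j
      simp only [PiLp.add_apply, PiLp.smul_apply, smul_eq_mul, hydef, PiLp.toLp_apply]
      by_cases hji : j = i
      · subst hji
        simp only [if_pos]
        rw [hθdef, div_mul_cancel₀ _ hxi]
        ring
      · simp only [hji, if_neg, ite_false]
        ring
    rw [heq]
    exact hcomb

lemma good_rep {n : ℕ} {K K' : Set (EuclideanSpace ℝ (Fin n))}
    (hKconv : Convex ℝ K) (hKlab : IsLocallyAntiBlocking K)
    (hK'conv : Convex ℝ K') (hK'lab : IsLocallyAntiBlocking K') :
    ∀ m : ℕ, ∀ x ∈ K, ∀ y ∈ K',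
      (Finset.univ.filter (fun i => x i * y i < 0)).card ≤ m →
      ∃ x' ∈ K, ∃ y' ∈ K', x' + y' = x + y ∧ ∀ i, 0 ≤ x' i * y' i := by
  classical
  intro m
  induction m with
  | zero =>
    intro x hx y hy hcard
    refine ⟨x, hx, y, hy, rfl, fun i => ?_⟩
    by_contra h
    push_neg at h
    have hmem : i ∈ Finset.univ.filter (fun i => x i * y i < 0) := by simp [h]
    have := Finset.card_pos.mpr ⟨i, hmem⟩
    omega
  | succ m ih =>
    intro x hx y hy hcard
    by_cases hempty : (Finset.univ.filter (fun i => x i * y i < 0)) = ∅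
    · exact ih x hx y hy (by simp [hempty])
    · obtain ⟨i, hi⟩ := Finset.nonempty_iff_ne_empty.mpr hempty
      have hbad : x i * y i < 0 := by simpa using hi
      have hsigns : (0 < x i ∧ y i < 0) ∨ (x i < 0 ∧ 0 < y i) := by
        rcases lt_trichotomy (x i) 0 with h | h | h
        · right; refine ⟨h, ?_⟩; nlinarith
        · exfalso; rw [h] at hbad; simp at hbad
        · left; refine ⟨h, ?_⟩; nlinarith
      have key : ∃ t : ℝ,
          ((0 ≤ x i - t ∧ x i - t ≤ x i) ∨ (x i ≤ x i - t ∧ x i - t ≤ 0)) ∧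
          ((0 ≤ y i + t ∧ y i + t ≤ y i) ∨ (y i ≤ y i + t ∧ y i + t ≤ 0)) ∧
          (x i - t) * (y i + t) = 0 := by
        rcases hsigns with ⟨hx0, hy0⟩ | ⟨hx0, hy0⟩
        · rcases le_total (x i) (-(y i)) with h2 | h2
          · exact ⟨x i, Or.inl ⟨by linarith, by linarith⟩,
              Or.inr ⟨by linarith, by linarith⟩, by ring⟩
          · exact ⟨-(y i), Or.inl ⟨by linarith, by linarith⟩,
              Or.inr ⟨by linarith, by linarith⟩, by ring⟩
        · rcases le_total (-(x i)) (y i) with h2 | h2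
          · exact ⟨x i, Or.inr ⟨by linarith, by linarith⟩,
              Or.inl ⟨by linarith, by linarith⟩, by ring⟩
          · exact ⟨-(y i), Or.inr ⟨by linarith, by linarith⟩,
              Or.inl ⟨by linarith, by linarith⟩, by ring⟩
      obtain ⟨t, cond1, cond2, hprod⟩ := key
      set x' : EuclideanSpace ℝ (Fin n) := WithLp.toLp 2 (fun j => if j = i then x i - t else x j) with hx'def
      set y' : EuclideanSpace ℝ (Fin n) := WithLp.toLp 2 (fun j => if j = i then y i + t else y j) with hy'def
      have hx' : x' ∈ K := update_mem hKconv hKlab hx i cond1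
      have hy' : y' ∈ K' := update_mem hK'conv hK'lab hy i cond2
      have hsum : x' + y' = x + y := by
        ext j
        simp only [PiLp.add_apply, hx'def, hy'def, PiLp.toLp_apply]
        by_cases hji : j = i
        · subst hji; simp only [if_pos]; ring
        · simp [hji]
      have hsubset : Finset.univ.filter (fun j => x' j * y' j < 0) ⊆
          (Finset.univ.filter (fun j => x j * y j < 0)).erase i := by
        intro j hj
        simp only [Finset.mem_filter, Finset.mem_univ, true_and] at hj
        rw [Finset.mem_erase]
        constructor
        · rintro rfl
          simp only [hx'def, hy'def, PiLp.toLp_apply, if_pos] at hj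
          rw [hprod] at hj
          exact lt_irrefl 0 hj
        · have hji : j ≠ i := by
            rintro rfl
            simp only [hx'def, hy'def, PiLp.toLp_apply, if_pos] at hj
            rw [hprod] at hj
            exact lt_irrefl 0 hj
          simp only [Finset.mem_filter, Finset.mem_univ, true_and]
          simpa [hx'def, hy'def, hji] using hj
      have hcard' : (Finset.univ.filter (fun j => x' j * y' j < 0)).card ≤ m := by
        have h1 := Finset.card_le_card hsubset
        have h2 := Finset.card_erase_of_mem hi
        omega
      obtain ⟨x'', hx'', y'', hy'', hsum', hgood⟩ := ih x' hx' y' hy' hcard'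
      exact ⟨x'', hx'', y'', hy'', by rw [hsum', hsum], hgood⟩

lemma sign_choice {a b : ℝ} (h : 0 ≤ a * b) :
    0 ≤ sgn (decide (0 ≤ a + b)) * a ∧ 0 ≤ sgn (decide (0 ≤ a + b)) * b := by
  by_cases hab : 0 ≤ a + b
  · have hsg : sgn (decide (0 ≤ a + b)) = 1 := by simp [sgn, hab]
    rw [hsg]
    constructor <;> nlinarith
  · have hsg : sgn (decide (0 ≤ a + b)) = -1 := by simp [sgn, hab]
    rw [hsg]
    push_neg at hab
    constructor <;> nlinarith

/-- For locally anti-blocking bodies `K, K' ⊆ ℝⁿ`, the Minkowski sum dissects along orthants: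
`K + K' = ⋃_σ (K_σ + K'_σ)`, and for `σ ≠ τ` the pieces intersect in Lebesgue measure zero. -/
theorem add_locally_antiblocking_dissection
    (n : ℕ) (K K' : Set (EuclideanSpace ℝ (Fin n)))
    (hKconv : Convex ℝ K) (hKcomp : IsCompact K) (hKne : K.Nonempty)
    (hKlab : IsLocallyAntiBlocking K)
    (hK'conv : Convex ℝ K') (hK'comp : IsCompact K') (hK'ne : K'.Nonempty)
    (hK'lab : IsLocallyAntiBlocking K') :
    (K + K' = ⋃ σ : Fin n → Bool, ((K ∩ signedOrthant σ) + (K' ∩ signedOrthant σ))) ∧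
    (∀ σ τ : Fin n → Bool, σ ≠ τ →
      volume (((K ∩ signedOrthant σ) + (K' ∩ signedOrthant σ)) ∩
        ((K ∩ signedOrthant τ) + (K' ∩ signedOrthant τ))) = 0) := by
    classical
  constructor
  · ext z
    constructor
    · intro hz
      rw [Set.mem_add] at hz
      obtain ⟨x, hx, y, hy, rfl⟩ := hz
      obtain ⟨x', hx', y', hy', hsum, hgood⟩ :=
        good_rep hKconv hKlab hK'conv hK'lab n x hx y hy (by
          calc (Finset.univ.filter (fun i => x i * y i < 0)).card
              ≤ Finset.univ.card := Finset.card_filter_le _ _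
            _ = n := by simp)
      set σ : Fin n → Bool := fun i => decide (0 ≤ x' i + y' i) with hσdef
      refine Set.mem_iUnion.mpr ⟨σ, ?_⟩
      rw [Set.mem_add]
      refine ⟨x', ⟨hx', fun i => (sign_choice (hgood i)).1⟩,
        y', ⟨hy', fun i => (sign_choice (hgood i)).2⟩, hsum⟩
    · intro hz
      obtain ⟨σ, hσ⟩ := Set.mem_iUnion.mp hz
      rw [Set.mem_add] at hσ ⊢
      obtain ⟨a, ha, b, hb, hab⟩ := hσ
      exact ⟨a, ha.1, b, hb.1, hab⟩
  · intro σ τ hστ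
    obtain ⟨i, hi⟩ : ∃ i, σ i ≠ τ i := by
      by_contra h
      push_neg at h
      exact hστ (funext h)
    have hsub : ((K ∩ signedOrthant σ) + (K' ∩ signedOrthant σ)) ∩
        ((K ∩ signedOrthant τ) + (K' ∩ signedOrthant τ)) ⊆
        {z : EuclideanSpace ℝ (Fin n) | z i = 0} := by
      rintro z ⟨h1, h2⟩
      rw [Set.mem_add] at h1 h2
      obtain ⟨a, ha, b, hb, hab⟩ := h1
      obtain ⟨c, hc, d, hd, hcd⟩ := h2
      have hσz : 0 ≤ sgn (σ i) * z i := by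
        rw [← hab]
        have h1' := ha.2 i
        have h2' := hb.2 i
        simp only [PiLp.add_apply, mul_add]
        linarith
      have hτz : 0 ≤ sgn (τ i) * z i := by
        rw [← hcd]
        have h1' := hc.2 i
        have h2' := hd.2 i
        simp only [PiLp.add_apply, mul_add]
        linarith
      have hopp : sgn (τ i) = - sgn (σ i) := by
        cases hσi : σ i <;> cases hτi : τ i <;> simp_all [sgn]
      rw [hopp, neg_mul] at hτz
      have hz0 : sgn (σ i) * z i = 0 := le_antisymm (by linarith) hσz
      rcases mul_eq_zero.mp hz0 with h | h
      · exact absurd h (sgn_ne_zero _)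
      · exact h
    refine measure_mono_null hsub ?_
    have heq : ({z : EuclideanSpace ℝ (Fin n) | z i = 0} : Set _) =
        (LinearMap.ker (EuclideanSpace.projₗ i (𝕜 := ℝ)) : Set _) := by
      ext x; simp [EuclideanSpace.projₗ]
    rw [heq]
    apply Measure.addHaar_submodule
    intro htop
    have h1 : (EuclideanSpace.single i (1:ℝ)) ∈
        LinearMap.ker (EuclideanSpace.projₗ i (𝕜 := ℝ)) := by rw [htop]; trivial
    simp [EuclideanSpace.projₗ] at h1
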